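/- arXiv:1308.5411 — 2 statements merged into one kernel-verified Lean document; each statement's English description precedes it below -/
import Mathlib

section
/- Let F be a self-adjoint bounded operator with 1 − F² compact. Then the loop s ↦ susp(F)(s), defined as cos(s) + i·sin(s)·F for s ∈ [0,π] and cos(s) + i·sin(s) for s ∈ [π,2π], consists of Fredholm operators for every s ∈ [0,2π], and agrees at the endpoints s = 0 and s = 2π (both equal to the identity up to the value 1), giving a continuous loop in the Fredholm operators based at invertible operators. -/
lemma susp_mul_aux {H : Type*} [NormedAddCommGroup H] [InnerProductSpace ℂ H]
    (a b : ℂ) (A : H →L[ℂ] H) :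
    (a • 1 + b • A) * (a • 1 - b • A) = (a * a) • 1 - (b * b) • (A * A) := by
  simp only [mul_sub, add_mul, smul_mul_smul_comm, mul_one, one_mul]
  rw [mul_comm a b]
  abel

lemma susp_mul_aux' {H : Type*} [NormedAddCommGroup H] [InnerProductSpace ℂ H]
    (a b : ℂ) (A : H →L[ℂ] H) :
    (a • 1 - b • A) * (a • 1 + b • A) = (a * a) • 1 - (b * b) • (A * A) := by
  simp only [sub_mul, mul_add, smul_mul_smul_comm, mul_one, one_mul]
  rw [mul_comm a b]
  abel

/-- For a self-adjoint bounded `F` with `1 - F²` compact, the APS suspension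
loop `susp(F)(s)` (equal to `cos s + i sin s · F` for `s ∈ [0,π]` and to the scalar
`cos s + i sin s` for `s ∈ [π,2π]`) consists of Fredholm operators (each admits a
parametrix modulo compacts), takes the value `1` at both endpoints `s = 0` and `s = 2π`
(an invertible operator), and is continuous on `[0, 2π]`. -/
theorem suspension_loop_fredholm
    {H : Type*} [NormedAddCommGroup H] [InnerProductSpace ℂ H] [CompleteSpace H]
    (F : H →L[ℂ] H) (hF : IsSelfAdjoint F)
    (hc : IsCompactOperator ((1 : H →L[ℂ] H) - F ∘L F)) :
    let susp : ℝ → H →L[ℂ] H := fun s =>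
      if s ≤ Real.pi then ((Real.cos s : ℝ) : ℂ) • 1 + (Complex.I * (Real.sin s : ℝ)) • F
      else (((Real.cos s : ℝ) : ℂ) + Complex.I * (Real.sin s : ℝ)) • 1
    (∀ s ∈ Set.Icc (0 : ℝ) (2 * Real.pi), ∃ B : H →L[ℂ] H,
        IsCompactOperator ((1 : H →L[ℂ] H) - susp s ∘L B) ∧
        IsCompactOperator ((1 : H →L[ℂ] H) - B ∘L susp s)) ∧
    susp 0 = 1 ∧ susp (2 * Real.pi) = 1 ∧
    ContinuousOn susp (Set.Icc (0 : ℝ) (2 * Real.pi)) := by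
  intro susp
  refine ⟨?_, ?_, ?_, ?_⟩
  · intro s _
    by_cases hs : s ≤ Real.pi
    · set a : ℂ := ((Real.cos s : ℝ) : ℂ)
      set b : ℂ := Complex.I * ((Real.sin s : ℝ) : ℂ)
      have hsusp : susp s = a • 1 + b • F := by simp only [susp, if_pos hs]; rfl
      have haa : a * a = 1 - ((Real.sin s : ℝ) : ℂ) ^ 2 := by
        have h := Real.sin_sq_add_cos_sq s
        have h2 : ((Real.sin s : ℝ) : ℂ) ^ 2 + a ^ 2 = 1 := by
          simp only [a]; exact_mod_cast congrArg (Complex.ofReal ·) h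
        have : a * a = a ^ 2 := (sq a).symm
        rw [this]; linear_combination h2
      have hbb : b * b = -(((Real.sin s : ℝ) : ℂ) ^ 2) := by
        simp only [b]; ring_nf; rw [Complex.I_sq]; ring
      set t : ℂ := ((Real.sin s : ℝ) : ℂ) ^ 2
      have key : ∀ X : H →L[ℂ] H, X = (a * a) • 1 - (b * b) • (F * F) →
          (1 : H →L[ℂ] H) - X = t • ((1 : H →L[ℂ] H) - F ∘L F) := by
        intro X hX
        rw [hX, haa, hbb]
        have : F ∘L F = F * F := rfl
        rw [this, smul_sub, sub_smul, one_smul, neg_smul]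
        abel
      have hcomp : ∀ T : H →L[ℂ] H, IsCompactOperator T → IsCompactOperator (t • T) := by
        intro T hT
        have := hT.smul t
        simpa using this
      refine ⟨a • 1 - b • F, ?_, ?_⟩
      · have : susp s ∘L (a • 1 - b • F) = (a * a) • 1 - (b * b) • (F * F) := by
          rw [hsusp]; exact susp_mul_aux a b F
        rw [key _ this]
        exact hcomp _ hc
      · have : (a • 1 - b • F) ∘L susp s = (a * a) • 1 - (b * b) • (F * F) := by
          rw [hsusp]; exact susp_mul_aux' a b F
        rw [key _ this]
        exact hcomp _ hc
    · set c : ℂ := ((Real.cos s : ℝ) : ℂ) + Complex.I * ((Real.sin s : ℝ) : ℂ)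
      have hsusp : susp s = c • 1 := by simp only [susp, if_neg hs]; rfl
      have hcne : c ≠ 0 := by
        intro h
        have hre : Real.cos s = 0 := by
          have := congrArg Complex.re h; simpa [c, ← Complex.ofReal_cos, ← Complex.ofReal_sin] using this
        have him : Real.sin s = 0 := by
          have := congrArg Complex.im h; simpa [c, ← Complex.ofReal_cos, ← Complex.ofReal_sin] using this
        nlinarith [Real.sin_sq_add_cos_sq s]
      refine ⟨c⁻¹ • (1 : H →L[ℂ] H), ?_, ?_⟩
      · have : susp s ∘L (c⁻¹ • (1 : H →L[ℂ] H)) = 1 := by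
          rw [hsusp]
          show (c • (1 : H →L[ℂ] H)) * (c⁻¹ • 1) = 1
          rw [smul_mul_smul_comm, mul_one, mul_inv_cancel₀ hcne, one_smul]
        rw [this, sub_self]
        exact isCompactOperator_zero
      · have : (c⁻¹ • (1 : H →L[ℂ] H)) ∘L susp s = 1 := by
          rw [hsusp]
          show (c⁻¹ • (1 : H →L[ℂ] H)) * (c • 1) = 1
          rw [smul_mul_smul_comm, mul_one, inv_mul_cancel₀ hcne, one_smul]
        rw [this, sub_self]
        exact isCompactOperator_zero
  · simp [susp, Real.pi_pos.le]
  · have h2 : ¬ (2 * Real.pi ≤ Real.pi) := by nlinarith [Real.pi_pos]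
    simp [susp, h2, Real.cos_two_pi, Real.sin_two_pi]
  · apply Continuous.continuousOn
    have hf' : Continuous fun s : ℝ =>
        (((Real.cos s : ℝ) : ℂ)) • (1 : H →L[ℂ] H) + (Complex.I * ((Real.sin s : ℝ) : ℂ)) • F := by
      exact ((Complex.continuous_ofReal.comp Real.continuous_cos).smul continuous_const).add
        ((continuous_const.mul (Complex.continuous_ofReal.comp Real.continuous_sin)).smul
          continuous_const)
    have hg' : Continuous fun s : ℝ =>
        ((((Real.cos s : ℝ) : ℂ)) + Complex.I * ((Real.sin s : ℝ) : ℂ)) • (1 : H →L[ℂ] H) := by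
      exact (((Complex.continuous_ofReal.comp Real.continuous_cos)).add
        (continuous_const.mul (Complex.continuous_ofReal.comp Real.continuous_sin))).smul
        continuous_const
    exact Continuous.if_le hf' hg' continuous_id continuous_const (by
      intro x hx
      simp only [hx, Real.cos_pi, Real.sin_pi]
      push_cast
      simp)
end

section
/- Let ψ_n (n ∈ ℤ) be elements of an associative complex algebra with relations {ψ_n, ψ_m} = 2δ_{n,−m}, and let e_n (n ∈ ℤ) be elements of another associative algebra with [e_n, e_m] = −n·δ_{n,−m}·1. In the tensor product algebra, set Q(φ) = Σ_k ψ_k ⊗ e_{−k} + (φ/2π)·ψ₀ ⊗ 1 (a finite truncation Σ_{|k| ≤ N} suffices for the algebraic identity). Then Q(φ)² = Σ_{n=1}^{N} n·ψ_n ψ_{−n} ⊗ 1 + 2·Σ_{k=1}^{N} 1 ⊗ e_k e_{−k} + 1 ⊗ (e₀ + φ/2π)², where ψ₀² = 1 is used and e₀ commutes with ψ₀. -/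
open TensorProduct

lemma sym_sum {M : Type*} [AddCommMonoid M] (F : ℤ → M) (N : ℕ) :
    ∑ k ∈ Finset.Icc (-(N:ℤ)) (N:ℤ), F k
      = F 0 + ∑ k ∈ Finset.Icc (1:ℤ) (N:ℤ), (F k + F (-k)) := by
  induction N with
  | zero => simp
  | succ n ih =>
    have h1 : Finset.Icc (-(n+1:ℕ) : ℤ) ((n+1:ℕ) : ℤ)
        = insert (-(n+1:ℕ) : ℤ) (insert ((n+1:ℕ) : ℤ) (Finset.Icc (-(n:ℕ) : ℤ) (n:ℕ))) := by
      ext x; simp only [Finset.mem_Icc, Finset.mem_insert]; push_cast; omega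
    have h2 : Finset.Icc (1:ℤ) ((n+1:ℕ):ℤ) = insert ((n+1:ℕ):ℤ) (Finset.Icc (1:ℤ) (n:ℕ)) := by
      ext x; simp only [Finset.mem_Icc, Finset.mem_insert]; push_cast; omega
    rw [h1, h2, Finset.sum_insert (by simp only [Finset.mem_insert, Finset.mem_Icc]; push_cast; omega),
      Finset.sum_insert (by simp only [Finset.mem_Icc]; push_cast; omega),
      Finset.sum_insert (by simp only [Finset.mem_Icc]; push_cast; omega), ih]
    abel

lemma half_cancel {M : Type*} [AddCommGroup M] [Module ℂ M] {x y : M}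
    (h : (2:ℂ) • x = (2:ℂ) • y) : x = y := by
  have := congrArg (fun z => ((2:ℂ)⁻¹) • z) h
  simpa [smul_smul] using this

/-- The square of the (truncated) odd supercharge
`Q(φ) = Σ_{|k|≤N} ψ_k ⊗ e_{-k} + (φ/2π)·ψ₀ ⊗ 1` in the tensor product of a Clifford
algebra (`{ψ_n, ψ_m} = 2δ_{n,-m}`) and a Heisenberg algebra (`[e_n, e_m] = -n δ_{n,-m}`)
equals `Σ_{n=1}^N n·ψ_nψ_{-n} ⊗ 1 + 2·Σ_{k=1}^N 1 ⊗ e_k e_{-k} + 1 ⊗ (e₀ + φ/2π)²`. -/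
theorem supercharge_square
    {A B : Type*} [Ring A] [Algebra ℂ A] [Ring B] [Algebra ℂ B]
    (ψ : ℤ → A) (e : ℤ → B) (N : ℕ) (φ : ℝ)
    (hψ : ∀ n m : ℤ, ψ n * ψ m + ψ m * ψ n = (if n + m = 0 then (2 : ℂ) else 0) • 1)
    (he : ∀ n m : ℤ, e n * e m - e m * e n = (if n + m = 0 then (-(n : ℂ)) else 0) • 1) :
    ∀ Q : A ⊗[ℂ] B,
    (Q = (∑ k ∈ Finset.Icc (-(N : ℤ)) (N : ℤ), ψ k ⊗ₜ[ℂ] e (-k))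
        + ((φ / (2 * Real.pi) : ℝ) : ℂ) • (ψ 0 ⊗ₜ[ℂ] (1 : B))) →
    Q * Q = (∑ n ∈ Finset.Icc (1 : ℤ) (N : ℤ), (n : ℂ) • ((ψ n * ψ (-n)) ⊗ₜ[ℂ] (1 : B)))
        + 2 • (∑ k ∈ Finset.Icc (1 : ℤ) (N : ℤ), (1 : A) ⊗ₜ[ℂ] (e k * e (-k)))
        + (1 : A) ⊗ₜ[ℂ] ((e 0 + ((φ / (2 * Real.pi) : ℝ) : ℂ) • 1) ^ 2) := by
  intro Q hQ
  set c : ℂ := ((φ / (2 * Real.pi) : ℝ) : ℂ) with hc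
  set I : Finset ℤ := Finset.Icc (-(N : ℤ)) (N : ℤ) with hI
  have h0I : (0:ℤ) ∈ I := by simp [hI, Finset.mem_Icc]
  have hnegI : ∀ k ∈ I, -k ∈ I := by
    intro k hk; simp only [hI, Finset.mem_Icc] at hk ⊢; omega
  -- basic consequences of the relations
  have hψ0 : ψ 0 * ψ 0 = 1 := by
    have h := hψ 0 0
    rw [if_pos (by norm_num : (0:ℤ)+0=0)] at h
    apply half_cancel
    rw [two_smul, h]
  have hanti : ∀ n m : ℤ, ψ m * ψ n = (if n + m = 0 then (2:ℂ) else 0) • 1 - ψ n * ψ m := by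
    intro n m; rw [← hψ n m]; abel
  have hanti2 : ∀ k : ℤ, ψ (-k) * ψ k = (2:ℂ) • 1 - ψ k * ψ (-k) := by
    intro k; have h := hψ k (-k); rw [if_pos (by omega)] at h; rw [← h]; abel
  have hcomm2 : ∀ k : ℤ, e (-k) * e k = e k * e (-k) + (k:ℂ) • 1 := by
    intro k; have h := he (-k) k; rw [if_pos (by omega)] at h
    simp only [Int.cast_neg, neg_neg] at h
    rw [← h]; abel
  have hecomm : ∀ n m : ℤ, e n * e m = e m * e n + (if n + m = 0 then (-(n:ℂ)) else 0) • 1 := by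
    intro n m; rw [← he n m]; abel
  set S : A ⊗[ℂ] B := ∑ k ∈ I, ψ k ⊗ₜ[ℂ] e (-k) with hS
  set T : A ⊗[ℂ] B := ψ 0 ⊗ₜ[ℂ] (1:B) with hT
  -- the double sum
  have hSS : S * S = ∑ k ∈ I, ∑ l ∈ I, (ψ k * ψ l) ⊗ₜ[ℂ] (e (-k) * e (-l)) := by
    rw [hS, Finset.sum_mul_sum]
    simp [Algebra.TensorProduct.tmul_mul_tmul]
  -- key identity for S * S
  set F : ℤ → A ⊗[ℂ] B := fun k =>
    (k:ℂ) • ((ψ k * ψ (-k)) ⊗ₜ[ℂ] (1:B)) + (2:ℂ) • ((1:A) ⊗ₜ[ℂ] (e k * e (-k))) with hF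
  have hpair : ∀ k l : ℤ,
      (ψ k * ψ l) ⊗ₜ[ℂ] (e (-k) * e (-l)) + (ψ l * ψ k) ⊗ₜ[ℂ] (e (-l) * e (-k))
        = if l = -k then F k else 0 := by
    intro k l
    by_cases hkl : l = -k
    · subst hkl
      rw [if_pos rfl, hF]
      simp only [neg_neg]
      rw [hanti2 k, hcomm2 k]
      simp only [tmul_add, add_tmul, sub_tmul, tmul_sub, ← smul_tmul', tmul_smul, smul_add, smul_sub, smul_smul]
      module
    · rw [if_neg hkl, hanti k l, hecomm (-k) (-l)]
      have hne : ¬ (k + l = 0) := by omega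
      have hne' : ¬ ((-k) + (-l) = 0) := by omega
      rw [if_neg hne, if_neg hne']
      simp only [zero_smul, zero_sub, add_zero, neg_tmul]
      abel
  have key : S * S
      = (∑ n ∈ Finset.Icc (1:ℤ) (N:ℤ), (n:ℂ) • ((ψ n * ψ (-n)) ⊗ₜ[ℂ] (1:B)))
        + (2:ℂ) • (∑ k ∈ Finset.Icc (1:ℤ) (N:ℤ), (1:A) ⊗ₜ[ℂ] (e k * e (-k)))
        + (1:A) ⊗ₜ[ℂ] (e 0 * e 0) := by
    apply half_cancel
    have lhs2 : (2:ℂ) • (S * S) = ∑ k ∈ I, F k := by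
      rw [two_smul, hSS]
      nth_rewrite 2 [Finset.sum_comm]
      rw [← Finset.sum_add_distrib]
      refine Finset.sum_congr rfl ?_
      intro k hk
      rw [← Finset.sum_add_distrib]
      rw [Finset.sum_congr rfl (fun l _ => hpair k l)]
      rw [Finset.sum_ite_eq' I (-k) (fun _ => F k), if_pos (hnegI k hk)]
    rw [lhs2, hI, sym_sum F N]
    have hF0 : F 0 = (2:ℂ) • ((1:A) ⊗ₜ[ℂ] (e 0 * e 0)) := by
      simp [hF]
    have hFk : ∀ k ∈ Finset.Icc (1:ℤ) (N:ℤ), F k + F (-k)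
        = (2:ℂ) • ((k:ℂ) • ((ψ k * ψ (-k)) ⊗ₜ[ℂ] (1:B)))
          + (2:ℂ) • ((2:ℂ) • ((1:A) ⊗ₜ[ℂ] (e k * e (-k)))) := by
      intro k hk
      rw [hF]
      simp only [neg_neg, Int.cast_neg]
      rw [hanti2 k, hcomm2 k]
      simp only [tmul_add, add_tmul, sub_tmul, tmul_sub, ← smul_tmul', tmul_smul, smul_add, smul_sub, smul_smul]
      module
    rw [Finset.sum_congr rfl hFk, hF0]
    simp only [smul_add, Finset.smul_sum, Finset.sum_add_distrib]
    abel
  -- cross terms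
  have hcross : S * T + T * S = (2:ℂ) • ((1:A) ⊗ₜ[ℂ] (e 0)) := by
    rw [hS, hT, Finset.sum_mul, Finset.mul_sum, ← Finset.sum_add_distrib]
    have heq : ∀ k ∈ I, (ψ k ⊗ₜ[ℂ] e (-k)) * (ψ 0 ⊗ₜ[ℂ] (1:B))
          + (ψ 0 ⊗ₜ[ℂ] (1:B)) * (ψ k ⊗ₜ[ℂ] e (-k))
        = if k = 0 then (2:ℂ) • ((1:A) ⊗ₜ[ℂ] (e 0)) else 0 := by
      intro k hk
      rw [Algebra.TensorProduct.tmul_mul_tmul, Algebra.TensorProduct.tmul_mul_tmul,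
        mul_one, one_mul, ← add_tmul, hψ k 0, add_zero]
      by_cases h : k = 0
      · subst h
        rw [if_pos rfl, if_pos rfl, smul_tmul']
        norm_num
      · rw [if_neg h, if_neg h, zero_smul, zero_tmul]
    rw [Finset.sum_congr rfl heq, Finset.sum_ite_eq' I (0:ℤ) (fun _ => (2:ℂ) • ((1:A) ⊗ₜ[ℂ] (e 0))), if_pos h0I]
  have hTT : T * T = (1 : A ⊗[ℂ] B) := by
    rw [hT, Algebra.TensorProduct.tmul_mul_tmul, mul_one, hψ0,
      Algebra.TensorProduct.one_def]
  -- expand the square of e 0 + c • 1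
  have hesq : (e 0 + c • 1) ^ 2 = e 0 * e 0 + (2*c) • (e 0) + (c*c) • (1:B) := by
    rw [sq]
    simp only [mul_add, add_mul, smul_mul_assoc, mul_smul_comm, mul_one, one_mul, smul_smul]
    module
  -- put it together
  have hQ2 : Q * Q = S * S + c • (S * T + T * S) + (c * c) • (T * T) := by
    rw [hQ, mul_add, add_mul, add_mul, smul_mul_assoc, smul_mul_assoc,
      mul_smul_comm, mul_smul_comm, smul_smul, smul_add]
    abel
  have h2 : (2:ℕ) • (∑ k ∈ Finset.Icc (1:ℤ) (N:ℤ), (1:A) ⊗ₜ[ℂ] (e k * e (-k)))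
      = (2:ℂ) • (∑ k ∈ Finset.Icc (1:ℤ) (N:ℤ), (1:A) ⊗ₜ[ℂ] (e k * e (-k))) := by
    rw [← Nat.cast_smul_eq_nsmul ℂ]; norm_num
  rw [hQ2, key, hcross, hTT, hesq, h2]
  rw [tmul_add, tmul_add, tmul_smul, tmul_smul, Algebra.TensorProduct.one_def]
  module
end
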